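/- Let X be a uniformly convex real Banach space and let C be a nonempty convex subset of X that is compact in the weak topology of X. Let γ ∈ [0,1] and μ ∈ [0,1/2] with 2μ ≤ γ, and let T : C → C satisfy condition B_{γ,μ} on C. Then T has a fixed point in C. -/

import Mathlib

open Filter Topology

set_option linter.unusedSectionVars false

section CondBAux

variable {X : Type*} [NormedAddCommGroup X] [NormedSpace ℝ X]

lemma condB_ucs [UniformConvexSpace X] {ε : ℝ} (hε : 0 < ε) :
    ∃ δ > 0, ∀ (R : ℝ), 0 < R → ∀ u v : X, ‖u‖ ≤ R → ‖v‖ ≤ R → ε * R ≤ ‖u - v‖ →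
      ‖u + v‖ ≤ (2 - δ) * R := by
  obtain ⟨δ, hδ, H⟩ := exists_forall_closed_ball_dist_add_le_two_sub X hε
  refine ⟨min δ 1, lt_min hδ one_pos, fun R hR u v hu hv huv => ?_⟩
  have hR' : R ≠ 0 := ne_of_gt hR
  have h1 : ‖R⁻¹ • u‖ ≤ 1 := by
    rw [norm_smul, norm_inv, Real.norm_eq_abs, abs_of_pos hR]
    rw [inv_mul_le_iff₀ hR]; simpa using hu
  have h2 : ‖R⁻¹ • v‖ ≤ 1 := by
    rw [norm_smul, norm_inv, Real.norm_eq_abs, abs_of_pos hR]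
    rw [inv_mul_le_iff₀ hR]; simpa using hv
  have h3 : ε ≤ ‖R⁻¹ • u - R⁻¹ • v‖ := by
    rw [← smul_sub, norm_smul, norm_inv, Real.norm_eq_abs, abs_of_pos hR,
      le_inv_mul_iff₀ hR]
    linarith [huv]
  have := H h1 h2 h3
  rw [← smul_add, norm_smul, norm_inv, Real.norm_eq_abs, abs_of_pos hR,
    inv_mul_le_iff₀ hR] at this
  calc ‖u + v‖ ≤ (2 - δ) * R := by linarith
    _ ≤ (2 - min δ 1) * R := by
        have : min δ 1 ≤ δ := min_le_left _ _
        nlinarith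



lemma condB_eval_weak_continuous (f : X →L[ℝ] ℝ) :
    Continuous (fun x : WeakSpace ℝ X => f x) :=
  WeakBilin.eval_continuous ((topDualPairing ℝ X).flip) f

lemma condB_norm_bound {C : Set X} (h : IsCompact (toWeakSpace ℝ X '' C)) :
    ∃ M : ℝ, ∀ x ∈ C, ‖x‖ ≤ M := by
  classical
  rcases Set.eq_empty_or_nonempty C with rfl | ⟨c₀, hc₀⟩
  · exact ⟨0, by simp⟩
  set g : C → (X →L[ℝ] ℝ) →L[ℝ] ℝ := fun c => NormedSpace.inclusionInDoubleDual ℝ X c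
  have hpt : ∀ f : X →L[ℝ] ℝ, ∃ M, ∀ c : C, ‖g c f‖ ≤ M := by
    intro f
    have hcont : Continuous (fun x : WeakSpace ℝ X => f x) := condB_eval_weak_continuous f
    have hcomp : IsCompact ((fun x : WeakSpace ℝ X => f x) '' (toWeakSpace ℝ X '' C)) :=
      h.image hcont
    obtain ⟨M, hM⟩ := hcomp.isBounded.exists_norm_le
    refine ⟨M, fun c => ?_⟩
    have : f (c : X) ∈ (fun x : WeakSpace ℝ X => f x) '' (toWeakSpace ℝ X '' C) :=
      ⟨toWeakSpace ℝ X (c : X), Set.mem_image_of_mem _ c.2, rfl⟩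
    simpa [g, NormedSpace.dual_def] using hM _ this
  obtain ⟨M', hM'⟩ := banach_steinhaus hpt
  refine ⟨M', fun x hx => ?_⟩
  have := hM' ⟨x, hx⟩
  have heq : ‖g ⟨x, hx⟩‖ = ‖x‖ :=
    (NormedSpace.inclusionInDoubleDualLi (𝕜 := ℝ) (E := X)).norm_map x
  rwa [heq] at this

lemma condB_bounded {C : Set X} (h : IsCompact (toWeakSpace ℝ X '' C)) :
    ∃ D : ℝ, 0 ≤ D ∧ ∀ x ∈ C, ∀ y ∈ C, ‖x - y‖ ≤ D := by
  obtain ⟨M, hM⟩ := condB_norm_bound h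
  refine ⟨2 * max M 0, by positivity, fun x hx y hy => ?_⟩
  have := hM x hx; have := hM y hy
  have h1 : M ≤ max M 0 := le_max_left _ _
  calc ‖x - y‖ ≤ ‖x‖ + ‖y‖ := norm_sub_le _ _
    _ ≤ 2 * max M 0 := by linarith

lemma condB_closed {C : Set X} (h : IsCompact (toWeakSpace ℝ X '' C)) : IsClosed C := by
  have hinj : Function.Injective ((topDualPairing ℝ X).flip) := by
    intro x y hxy
    have : ∀ f : X →L[ℝ] ℝ, f x = f y := fun f => by
      have := congrArg (fun φ => φ f) hxy
      simpa [topDualPairing] using this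
    exact (NormedSpace.eq_iff_forall_dual_eq ℝ).mpr this
  haveI : T2Space (WeakSpace ℝ X) := (WeakBilin.isEmbedding hinj).t2Space
  have hcl : IsClosed (toWeakSpace ℝ X '' C) := h.isClosed
  have : C = toWeakSpaceCLM ℝ X ⁻¹' (toWeakSpace ℝ X '' C) := by
    ext x
    constructor
    · intro hx; exact ⟨x, hx, rfl⟩
    · rintro ⟨y, hy, hxy⟩
      have : y = x := (toWeakSpace ℝ X).injective (by simpa using hxy)
      rwa [← this]
  rw [this]
  exact hcl.preimage (toWeakSpaceCLM ℝ X).continuous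

lemma condB_exists_min {C : Set X} (hne : C.Nonempty) (hCc : IsClosed C)
    (h : IsCompact (toWeakSpace ℝ X '' C)) (Φ : X → ℝ) (hcont : Continuous Φ)
    (hconv : ConvexOn ℝ C Φ) (h0 : ∀ x ∈ C, 0 ≤ Φ x) :
    ∃ z ∈ C, ∀ y ∈ C, Φ z ≤ Φ y := by
  classical
  set r : ℝ := sInf (Φ '' C) with hr
  have hbdd : BddBelow (Φ '' C) := ⟨0, by rintro _ ⟨x, hx, rfl⟩; exact h0 x hx⟩
  have hne' : (Φ '' C).Nonempty := hne.image _
  have hrle : ∀ y ∈ C, r ≤ Φ y := fun y hy => csInf_le hbdd ⟨y, hy, rfl⟩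
  set A : ℕ → Set X := fun k => {x ∈ C | Φ x ≤ r + 1 / (k + 1)} with hA
  have hAne : ∀ k, (A k).Nonempty := by
    intro k
    have hpos : (0 : ℝ) < 1 / (k + 1) := by positivity
    obtain ⟨a, ⟨x, hx, rfl⟩, hlt⟩ := Real.lt_sInf_add_pos hne' hpos
    exact ⟨x, hx, le_of_lt hlt⟩
  have hAconv : ∀ k, Convex ℝ (A k) := fun k => hconv.convex_le _
  have hAcl : ∀ k, IsClosed (A k) := fun k =>
    hCc.inter (isClosed_Iic.preimage hcont)
  have hAsub : ∀ k, A k ⊆ C := fun k x hx => hx.1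
  set W : ℕ → Set (WeakSpace ℝ X) := fun k => toWeakSpace ℝ X '' A k with hW
  have hWcl : ∀ k, IsClosed (W k) := by
    intro k
    have := (hAconv k).toWeakSpace_closure (𝕜 := ℝ)
    rw [(hAcl k).closure_eq] at this
    show IsClosed (toWeakSpace ℝ X '' A k)
    rw [this]; exact isClosed_closure
  have hWcomp : ∀ k, IsCompact (W k) := fun k =>
    h.of_isClosed_subset (hWcl k) (Set.image_mono (hAsub k))
  have hWne : ∀ k, (W k).Nonempty := fun k => (hAne k).image _
  have hWdec : ∀ k, W (k + 1) ⊆ W k := by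
    intro k
    apply Set.image_mono
    intro x hx
    refine ⟨hx.1, hx.2.trans ?_⟩
    have h12 : (1 : ℝ) / ((k:ℝ) + 2) ≤ 1 / ((k:ℝ) + 1) := by
      apply one_div_le_one_div_of_le
      · positivity
      · linarith
    push_cast
    ring_nf
    ring_nf at h12
    linarith
  obtain ⟨y, hy⟩ := IsCompact.nonempty_iInter_of_sequence_nonempty_isCompact_isClosed
    W hWdec hWne (hWcomp 0) hWcl
  obtain ⟨z, hz0, rfl⟩ := Set.mem_iInter.mp hy 0
  have hzA : ∀ k, z ∈ A k := by
    intro k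
    obtain ⟨z', hz', hzz⟩ := Set.mem_iInter.mp hy k
    rwa [(toWeakSpace ℝ X).injective hzz] at hz'
  refine ⟨z, hz0.1, fun y hy' => ?_⟩
  have hzr : Φ z ≤ r := by
    refine le_of_forall_pos_le_add fun ε hε => ?_
    obtain ⟨k, hk⟩ := exists_nat_one_div_lt hε
    exact (hzA k).2.trans (by linarith [hk])
  exact hzr.trans (hrle y hy')

lemma condB_key {C : Set X} {γ μ : ℝ} (hγ0 : 0 ≤ γ) (hγ1 : γ ≤ 1) (hμ0 : 0 ≤ μ)
    (hμ2 : μ ≤ 1 / 2) (hμγ : 2 * μ ≤ γ) {T : X → X} (hmaps : Set.MapsTo T C C)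
    (hB : ∀ x ∈ C, ∀ y ∈ C,
      γ * ‖x - T x‖ ≤ ‖x - y‖ + μ * ‖y - T y‖ →
        ‖T x - T y‖ ≤ (1 - γ) * ‖x - y‖ + μ * (‖x - T y‖ + ‖y - T x‖)) :
    ∃ K : ℝ, 0 ≤ K ∧ ∀ x ∈ C, ∀ y ∈ C, ‖x - T y‖ ≤ K * ‖x - T x‖ + ‖x - y‖ := by
  have h1μ : (0 : ℝ) < 1 - μ := by linarith
  rcases eq_or_lt_of_le hμ0 with hμz | hμpos
  · -- μ = 0
    refine ⟨3, by norm_num, fun x hx y hy => ?_⟩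
    subst hμz
    have ha0 : (0:ℝ) ≤ ‖x - T x‖ := norm_nonneg _
    have hs0 : (0:ℝ) ≤ ‖x - y‖ := norm_nonneg _
    by_cases hp : γ * ‖x - T x‖ ≤ ‖x - y‖ + 0 * ‖y - T y‖
    · have hc := hB x hx y hy hp
      have h1 : ‖x - T y‖ ≤ ‖x - T x‖ + ‖T x - T y‖ := norm_sub_le_norm_sub_add_norm_sub _ _ _
      nlinarith [mul_nonneg hγ0 hs0]
    · push_neg at hp
      have hxy : ‖x - y‖ < γ * ‖x - T x‖ := by linarith [hp]
      have hs1 : ‖T x - T (T x)‖ ≤ (1 - γ) * ‖x - T x‖ := by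
        have hpre : γ * ‖x - T x‖ ≤ ‖x - T x‖ + 0 * ‖T x - T (T x)‖ := by nlinarith
        have := hB x hx (T x) (hmaps hx) hpre
        nlinarith [norm_nonneg (x - T (T x)), norm_nonneg (T x - T x)]
      have hTxy : ‖x - T x‖ - ‖x - y‖ ≤ ‖T x - y‖ := by
        linarith [norm_sub_le_norm_sub_add_norm_sub x y (T x), norm_sub_rev y (T x)]
      have hpre2 : γ * ‖T x - T (T x)‖ ≤ ‖T x - y‖ + 0 * ‖y - T y‖ := by
        nlinarith [mul_le_mul_of_nonneg_left hs1 hγ0,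
          mul_nonneg (mul_nonneg (sub_nonneg.2 hγ1) (sub_nonneg.2 hγ1)) ha0,
          mul_nonneg (mul_nonneg hγ0 (sub_nonneg.2 hγ1)) ha0]
      have hs2 := hB (T x) (hmaps hx) y hy hpre2
      have htri : ‖x - T y‖ ≤ ‖x - T x‖ + ‖T x - T (T x)‖ + ‖T (T x) - T y‖ := by
        calc ‖x - T y‖ ≤ ‖x - T (T x)‖ + ‖T (T x) - T y‖ :=
              norm_sub_le_norm_sub_add_norm_sub _ _ _
          _ ≤ ‖x - T x‖ + ‖T x - T (T x)‖ + ‖T (T x) - T y‖ := by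
              linarith [norm_sub_le_norm_sub_add_norm_sub x (T x) (T (T x))]
      have hTxy2 : ‖T x - y‖ ≤ ‖x - T x‖ + ‖x - y‖ := by
        linarith [norm_sub_le_norm_sub_add_norm_sub (T x) x y, norm_sub_rev (T x) x]
      nlinarith [norm_nonneg (T x - y), mul_le_mul_of_nonneg_left hTxy2 hγ0,
        mul_nonneg hγ0 ha0, mul_nonneg hγ0 hs0,
        mul_nonneg (mul_nonneg hγ0 hγ0) ha0]
  · -- μ > 0
    have hk : μ * (γ / μ) = γ := by field_simp
    have hk0 : (0:ℝ) ≤ γ / μ := by positivity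
    have hk2 : 2 ≤ γ / μ := by rw [le_div_iff₀ hμpos]; linarith
    refine ⟨3 + γ / μ, by positivity, fun x hx y hy => ?_⟩
    set k := γ / μ
    have ha0 : (0:ℝ) ≤ ‖x - T x‖ := norm_nonneg _
    have hs0 : (0:ℝ) ≤ ‖x - y‖ := norm_nonneg _
    by_cases hp : γ * ‖x - T x‖ ≤ ‖x - y‖ + μ * ‖y - T y‖
    · have hc := hB x hx y hy hp
      have h1 : ‖x - T y‖ ≤ ‖x - T x‖ + ‖T x - T y‖ := norm_sub_le_norm_sub_add_norm_sub _ _ _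
      have h2 : ‖y - T x‖ ≤ ‖x - y‖ + ‖x - T x‖ := by
        linarith [norm_sub_le_norm_sub_add_norm_sub y x (T x), norm_sub_rev y x]
      have e1 : (1 - μ) * ‖x - T y‖ ≤ (1 + μ) * ‖x - T x‖ + (1 - γ + μ) * ‖x - y‖ := by
        nlinarith [mul_le_mul_of_nonneg_left h2 hμ0]
      have e2 : (1 + μ) * ‖x - T x‖ + (1 - γ + μ) * ‖x - y‖
          ≤ (1 - μ) * ((3 + k) * ‖x - T x‖ + ‖x - y‖) := by
        nlinarith [mul_nonneg (by linarith : (0:ℝ) ≤ 2 - γ - 4 * μ + k) ha0,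
          mul_nonneg (by linarith : (0:ℝ) ≤ γ - 2 * μ) hs0,
          mul_nonneg (mul_nonneg hμ0 hk0) ha0]
      have := e1.trans e2
      exact le_of_mul_le_mul_left this h1μ
    · push_neg at hp
      have hb' : ‖y - T y‖ ≤ k * ‖x - T x‖ := by
        have heq : μ * (k * ‖x - T x‖) = γ * ‖x - T x‖ := by rw [← mul_assoc, hk]
        have h' : μ * ‖y - T y‖ ≤ μ * (k * ‖x - T x‖) := by
          rw [heq]; linarith [norm_nonneg (x - y)]
        exact le_of_mul_le_mul_left h' hμpos
      have h1 : ‖x - T y‖ ≤ ‖x - y‖ + ‖y - T y‖ := norm_sub_le_norm_sub_add_norm_sub _ _ _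
      nlinarith

set_option maxHeartbeats 1000000 in
lemma condB_afps_mu_pos [UniformConvexSpace X] {C : Set X} {c₀ : X} (hc₀ : c₀ ∈ C)
    {D : ℝ} (hD : ∀ x ∈ C, ∀ y ∈ C, ‖x - y‖ ≤ D)
    {γ μ : ℝ} (hγ1 : γ ≤ 1) (hμpos : 0 < μ) (hμ2 : μ ≤ 1 / 2) (hμγ : 2 * μ ≤ γ)
    {T : X → X} (hmaps : Set.MapsTo T C C)
    (hB : ∀ x ∈ C, ∀ y ∈ C,
      γ * ‖x - T x‖ ≤ ‖x - y‖ + μ * ‖y - T y‖ →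
        ‖T x - T y‖ ≤ (1 - γ) * ‖x - y‖ + μ * (‖x - T y‖ + ‖y - T x‖)) :
    ∃ x : ℕ → X, (∀ n, x n ∈ C) ∧ Tendsto (fun n => ‖x n - T (x n)‖) atTop (𝓝 0) := by
  have h1μ : (0 : ℝ) < 1 - μ := by linarith
  set x : ℕ → X := fun n => T^[n] c₀ with hx
  have hsucc : ∀ n, x (n + 1) = T (x n) := fun n => Function.iterate_succ_apply' T n c₀
  have hxC : ∀ n, x n ∈ C := by
    intro n
    induction n with
    | zero => exact hc₀
    | succ n ih => rw [hsucc]; exact hmaps ih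
  set d : ℕ → X := fun n => x n - x (n + 1) with hd
  set a : ℕ → ℝ := fun n => ‖d n‖ with ha
  have ha0 : ∀ n, 0 ≤ a n := fun n => norm_nonneg _
  refine ⟨x, hxC, ?_⟩
  have hgoal : (fun n => ‖x n - T (x n)‖) = a := by
    funext n; rw [ha, hd]; simp only [hsucc]
  rw [hgoal]
  -- key inequality
  have key1 : ∀ n, a (n + 1) ≤ (1 - γ) * a n + μ * ‖x n - x (n + 2)‖ := by
    intro n
    have hpre : γ * ‖x n - T (x n)‖ ≤ ‖x n - x (n + 1)‖ + μ * ‖x (n + 1) - T (x (n + 1))‖ := by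
      rw [← hsucc]
      have := norm_nonneg (x n - x (n+1))
      have := norm_nonneg (x (n+1) - T (x (n+1)))
      nlinarith
    have hc := hB (x n) (hxC n) (x (n + 1)) (hxC (n + 1)) hpre
    rw [← hsucc, ← hsucc] at hc
    simp only [sub_self, norm_zero] at hc
    rw [show n + 1 + 1 = n + 2 from rfl] at hc
    have hc' : a (n + 1) ≤ (1 - γ) * a n + μ * (‖x n - x (n + 2)‖ + 0) := hc
    linarith
  have hxtri : ∀ n, ‖x n - x (n + 2)‖ ≤ a n + a (n + 1) := by
    intro n
    have h := norm_sub_le_norm_sub_add_norm_sub (x n) (x (n+1)) (x (n+2))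
    have e : a n + a (n+1) = ‖x n - x (n+1)‖ + ‖x (n+1) - x (n+2)‖ := rfl
    rw [e]; exact h
  have key2 : ∀ n, a (n + 1) ≤ a n := by
    intro n
    have h1 := key1 n
    have h2 := hxtri n
    have : (1 - μ) * a (n + 1) ≤ (1 - μ) * a n := by nlinarith [ha0 n, ha0 (n+1)]
    exact le_of_mul_le_mul_left this h1μ
  have hanti : Antitone a := antitone_nat_of_succ_le key2
  have hbdd : BddBelow (Set.range a) := ⟨0, by rintro _ ⟨n, rfl⟩; exact ha0 n⟩
  set r : ℝ := ⨅ n, a n with hr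
  have htend : Tendsto a atTop (𝓝 r) := tendsto_atTop_ciInf hanti hbdd
  have han : ∀ n, r ≤ a n := fun n => ciInf_le hbdd n
  have hr0 : 0 ≤ r := le_ciInf ha0
  rcases eq_or_lt_of_le hr0 with hrz | hrpos
  · rw [← hrz] at htend; exact htend
  exfalso
  -- difference of consecutive steps tends to 0
  have hdiff : ∀ ε > 0, ∃ N, ∀ n ≥ N, ‖d n - d (n + 1)‖ ≤ ε := by
    intro ε hε
    have ha00 : 0 < a 0 := lt_of_lt_of_le hrpos (han 0)
    set ε' : ℝ := ε / (a 0 + 1) with hε'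
    have hε'pos : 0 < ε' := by positivity
    obtain ⟨δ, hδ, H⟩ := condB_ucs (X := X) hε'pos
    have hev : ∀ᶠ n in atTop, a n < r + μ * δ * r := by
      apply htend.eventually (gt_mem_nhds ?_)
      nlinarith [mul_pos (mul_pos hμpos hδ) hrpos]
    obtain ⟨N, hN⟩ := eventually_atTop.mp hev
    refine ⟨N, fun n hn => ?_⟩
    by_contra hcon
    push_neg at hcon
    have hanpos : 0 < a n := lt_of_lt_of_le hrpos (han n)
    have hu : ‖d n‖ ≤ a n := le_refl _
    have hv : ‖d (n + 1)‖ ≤ a n := key2 n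
    have hεR : ε' * a n ≤ ‖d n - d (n + 1)‖ := by
      have h1 : a n ≤ a 0 := hanti (Nat.zero_le n)
      have h0 : ε' * a n ≤ ε' * a 0 := by nlinarith
      have h2 : ε' * a 0 < ε := by
        rw [hε', div_mul_eq_mul_div, div_lt_iff₀ (by positivity)]
        nlinarith
      linarith
    have hsum := H (a n) hanpos (d n) (d (n + 1)) hu hv hεR
    have hdd : d n + d (n + 1) = x n - x (n + 2) := by
      show (x n - x (n+1)) + (x (n+1) - x (n+1+1)) = x n - x (n+2)
      rw [show n + 1 + 1 = n + 2 from rfl]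
      abel
    rw [hdd] at hsum
    have hk1 := key1 n
    have hen : a n - a (n + 1) < μ * δ * r := by
      have := hN n hn
      have := han (n + 1)
      linarith
    nlinarith [mul_le_mul_of_nonneg_left (han n) (le_of_lt (mul_pos hμpos hδ)),
      mul_le_mul_of_nonneg_left hsum (le_of_lt hμpos),
      mul_nonneg (by linarith : (0:ℝ) ≤ γ - 2 * μ) (ha0 n)]
  -- telescoping sum identity
  have hsum : ∀ (N mm : ℕ), x N - x (N + mm) = ∑ i ∈ Finset.range mm, d (N + i) := by
    intro N mm
    induction mm with
    | zero => simp
    | succ mm ih =>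
        rw [Finset.sum_range_succ, ← ih]
        show x N - x (N + (mm + 1)) = x N - x (N + mm) + (x (N + mm) - x (N + mm + 1))
        rw [show N + (mm + 1) = N + mm + 1 from rfl]
        abel
  -- final contradiction via boundedness
  obtain ⟨m, hm⟩ := exists_nat_gt (D / r)
  have hD0 : 0 ≤ D := by
    have := hD c₀ hc₀ c₀ hc₀
    linarith [norm_nonneg (c₀ - c₀)]
  have hmr : D < (m : ℝ) * r := by
    rw [div_lt_iff₀ hrpos] at hm
    linarith
  have hm0 : 0 < (m : ℝ) := by
    by_contra h
    push_neg at h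
    nlinarith
  set ε₀ : ℝ := ((m : ℝ) * r - D) / ((m : ℝ) * m + 1) with hε₀
  have hε₀pos : 0 < ε₀ := by
    apply div_pos (by linarith) (by positivity)
  have heq : ε₀ * ((m : ℝ) * m + 1) = (m : ℝ) * r - D := by
    rw [hε₀]; field_simp
  obtain ⟨N, hN⟩ := hdiff ε₀ hε₀pos
  have claim : ∀ i, ‖d (N + i) - d N‖ ≤ i * ε₀ := by
    intro i
    induction i with
    | zero => simp
    | succ i ih =>
        have h1 : ‖d (N + i + 1) - d (N + i)‖ ≤ ε₀ := by
          have := hN (N + i) (Nat.le_add_right _ _)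
          rwa [norm_sub_rev]
        calc ‖d (N + (i + 1)) - d N‖
            ≤ ‖d (N + i + 1) - d (N + i)‖ + ‖d (N + i) - d N‖ := by
              rw [show N + (i + 1) = N + i + 1 from rfl]
              exact norm_sub_le_norm_sub_add_norm_sub _ _ _
          _ ≤ ε₀ + i * ε₀ := add_le_add h1 ih
          _ = ((i : ℝ) + 1) * ε₀ := by ring
          _ = ((i + 1 : ℕ) : ℝ) * ε₀ := by push_cast; ring
  have hlow : (m : ℝ) * a N - (m : ℝ) * m * ε₀ ≤ ‖x N - x (N + m)‖ := by
    set S : X := ∑ i ∈ Finset.range m, (d (N + i) - d N) with hS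
    have hms : (m : ℝ) • d N = ∑ i ∈ Finset.range m, d N := by
      rw [Finset.sum_const, Finset.card_range, Nat.cast_smul_eq_nsmul]
    have hsplit : ∑ i ∈ Finset.range m, d (N + i) = (m : ℝ) • d N + S := by
      rw [hms, hS, ← Finset.sum_add_distrib]
      congr 1
      funext i
      abel
    have hb1 : ‖S‖ ≤ (m : ℝ) * m * ε₀ := by
      calc ‖S‖ ≤ ∑ i ∈ Finset.range m, ‖d (N + i) - d N‖ := norm_sum_le _ _
        _ ≤ ∑ i ∈ Finset.range m, (m : ℝ) * ε₀ := by
            apply Finset.sum_le_sum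
            intro i hi
            have hcl := claim i
            have hi' : (i : ℝ) ≤ m := by
              exact_mod_cast le_of_lt (Finset.mem_range.mp hi)
            nlinarith
        _ = (m : ℝ) * m * ε₀ := by
            rw [Finset.sum_const, Finset.card_range, nsmul_eq_mul]
            ring
    have hnrm : (m : ℝ) * a N = ‖(m : ℝ) • d N‖ := by
      rw [norm_smul, Real.norm_eq_abs, abs_of_nonneg (le_of_lt hm0)]
    have h3 : ‖(m : ℝ) • d N‖ ≤ ‖(m : ℝ) • d N + S‖ + ‖S‖ := by
      have := norm_sub_le ((m : ℝ) • d N + S) S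
      simpa using this
    rw [hsum N m, hsplit]
    linarith [hnrm ▸ h3]
  have hup : ‖x N - x (N + m)‖ ≤ D := hD _ (hxC N) _ (hxC (N + m))
  nlinarith [han N, mul_le_mul_of_nonneg_left (han N) (le_of_lt hm0)]

lemma condB_afps_nonexp [CompleteSpace X] {C : Set X} (hCc : IsClosed C)
    (hconv : Convex ℝ C) {c₀ : X} (hc₀ : c₀ ∈ C) {D : ℝ} (hD0 : 0 ≤ D)
    (hD : ∀ x ∈ C, ∀ y ∈ C, ‖x - y‖ ≤ D) {T : X → X} (hmaps : Set.MapsTo T C C)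
    (hne : ∀ x ∈ C, ∀ y ∈ C, ‖T x - T y‖ ≤ ‖x - y‖) :
    ∃ x : ℕ → X, (∀ n, x n ∈ C) ∧ Tendsto (fun n => ‖x n - T (x n)‖) atTop (𝓝 0) := by
  haveI : Nonempty ↥C := ⟨⟨c₀, hc₀⟩⟩
  haveI : CompleteSpace ↥C := hCc.completeSpace_coe
  have key : ∀ n : ℕ, ∃ p ∈ C, ‖p - T p‖ ≤ D / (n + 1) := by
    intro n
    set θ : ℝ := (n : ℝ) / (n + 1) with hθ
    have hn1 : (0:ℝ) < (n:ℝ) + 1 := by positivity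
    have hθ0 : 0 ≤ θ := by positivity
    have hθ1 : θ < 1 := by rw [hθ, div_lt_one hn1]; linarith
    have hθ1' : 1 - θ = 1 / ((n:ℝ) + 1) := by
      rw [hθ]; field_simp
      ring
    set S : ↥C → ↥C := fun p =>
      ⟨(1 - θ) • c₀ + θ • T p, hconv hc₀ (hmaps p.2) (by linarith) hθ0 (by ring)⟩ with hS
    have hlip : LipschitzWith ⟨θ, hθ0⟩ S := by
      apply LipschitzWith.of_dist_le_mul
      intro p q
      have hsub : ((S p : X) - (S q : X)) = θ • (T (p : X) - T (q : X)) := by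
        simp only [hS, smul_sub]
        abel
      have hd : dist (S p) (S q) = θ * ‖T (p : X) - T (q : X)‖ := by
        rw [Subtype.dist_eq, dist_eq_norm, hsub, norm_smul, Real.norm_eq_abs,
          abs_of_nonneg hθ0]
      rw [hd]
      have := hne (p : X) p.2 (q : X) q.2
      have hdist : dist p q = ‖(p : X) - (q : X)‖ := by
        rw [Subtype.dist_eq, dist_eq_norm]
      push_cast
      rw [hdist]
      exact mul_le_mul_of_nonneg_left this hθ0
    have hcontr : ContractingWith ⟨θ, hθ0⟩ S := ⟨NNReal.coe_lt_coe.mp (by exact hθ1), hlip⟩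
    set p : ↥C := ContractingWith.fixedPoint S hcontr with hpdef
    have hp : S p = p := hcontr.fixedPoint_isFixedPt
    refine ⟨(p : X), p.2, ?_⟩
    have hval : (1 - θ) • c₀ + θ • T (p : X) = (p : X) := by
      have := congrArg (Subtype.val) hp
      simpa [hS] using this
    have hdiff : (p : X) - T (p : X) = (1 - θ) • (c₀ - T (p : X)) := by
      calc (p : X) - T (p : X) = ((1 - θ) • c₀ + θ • T (p : X)) - T (p : X) := by
            rw [hval]
        _ = (1 - θ) • (c₀ - T (p : X)) := by module
    rw [hdiff, norm_smul, Real.norm_eq_abs, abs_of_nonneg (by linarith : (0:ℝ) ≤ 1 - θ),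
      hθ1']
    have hTb : ‖c₀ - T (p : X)‖ ≤ D := hD c₀ hc₀ (T (p : X)) (hmaps p.2)
    rw [div_eq_mul_inv, div_eq_mul_inv, one_mul, mul_comm]
    exact mul_le_mul_of_nonneg_right hTb (by positivity)
  choose p hpC hpb using key
  refine ⟨p, hpC, ?_⟩
  apply squeeze_zero (fun n => norm_nonneg _) hpb
  have : Tendsto (fun n : ℕ => D * (1 / ((n:ℝ) + 1))) atTop (𝓝 (D * 0)) :=
    tendsto_const_nhds.mul tendsto_one_div_add_atTop_nhds_zero_nat
  simpa [div_eq_mul_inv, mul_comm] using this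

lemma condB_afps_geom {C : Set X} {c₀ : X} (hc₀ : c₀ ∈ C)
    {γ : ℝ} (hγpos : 0 < γ) (hγ1 : γ ≤ 1)
    {T : X → X} (hmaps : Set.MapsTo T C C)
    (hB0 : ∀ x ∈ C, ∀ y ∈ C, γ * ‖x - T x‖ ≤ ‖x - y‖ → ‖T x - T y‖ ≤ (1 - γ) * ‖x - y‖) :
    ∃ x : ℕ → X, (∀ n, x n ∈ C) ∧ Tendsto (fun n => ‖x n - T (x n)‖) atTop (𝓝 0) := by
  set x : ℕ → X := fun n => T^[n] c₀ with hx
  have hsucc : ∀ n, x (n + 1) = T (x n) := fun n => Function.iterate_succ_apply' T n c₀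
  have hxC : ∀ n, x n ∈ C := by
    intro n
    induction n with
    | zero => exact hc₀
    | succ n ih => rw [hsucc]; exact hmaps ih
  set a : ℕ → ℝ := fun n => ‖x n - T (x n)‖ with ha
  have ha0 : ∀ n, 0 ≤ a n := fun n => norm_nonneg _
  refine ⟨x, hxC, ?_⟩
  have key : ∀ n, a (n + 1) ≤ (1 - γ) * a n := by
    intro n
    have hpre : γ * ‖x n - T (x n)‖ ≤ ‖x n - x (n + 1)‖ := by
      rw [hsucc]
      nlinarith [norm_nonneg (x n - T (x n))]
    have hc := hB0 (x n) (hxC n) (x (n + 1)) (hxC (n + 1)) hpre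
    calc a (n + 1) = ‖T (x n) - T (x (n + 1))‖ := by rw [ha]; simp only [hsucc]
      _ ≤ (1 - γ) * ‖x n - x (n + 1)‖ := hc
      _ = (1 - γ) * a n := by rw [hsucc, ha]
  have hub : ∀ n, a n ≤ (1 - γ) ^ n * a 0 := by
    intro n
    induction n with
    | zero => simp
    | succ n ih =>
        calc a (n + 1) ≤ (1 - γ) * a n := key n
          _ ≤ (1 - γ) * ((1 - γ) ^ n * a 0) := by nlinarith [ha0 n]
          _ = (1 - γ) ^ (n + 1) * a 0 := by ring
  apply squeeze_zero ha0 hub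
  have h1 : Tendsto (fun n : ℕ => (1 - γ) ^ n) atTop (𝓝 0) :=
    tendsto_pow_atTop_nhds_zero_of_lt_one (by linarith) (by linarith)
  simpa using h1.mul_const (a 0)

end CondBAux

set_option maxHeartbeats 1000000 in
/-- A self-map of a nonempty convex weakly compact subset of a uniformly
convex Banach space satisfying condition `B_{γ,μ}` has a fixed point. -/
theorem condB_fixed_point_weakly_compact
    {X : Type*} [NormedAddCommGroup X] [NormedSpace ℝ X] [CompleteSpace X]
    [UniformConvexSpace X]
    (C : Set X) (hC : C.Nonempty) (hconv : Convex ℝ C)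
    (hwcomp : IsCompact (toWeakSpace ℝ X '' C))
    (γ μ : ℝ) (hγ : γ ∈ Set.Icc (0 : ℝ) 1) (hμ : μ ∈ Set.Icc (0 : ℝ) (1 / 2))
    (hμγ : 2 * μ ≤ γ)
    (T : X → X) (hmaps : Set.MapsTo T C C)
    (hB : ∀ x ∈ C, ∀ y ∈ C,
      γ * ‖x - T x‖ ≤ ‖x - y‖ + μ * ‖y - T y‖ →
        ‖T x - T y‖ ≤ (1 - γ) * ‖x - y‖ + μ * (‖x - T y‖ + ‖y - T x‖)) :
    ∃ z ∈ C, T z = z := by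
  obtain ⟨hγ0, hγ1⟩ := hγ
  obtain ⟨hμ0, hμ2⟩ := hμ
  obtain ⟨c₀, hc₀⟩ := hC
  obtain ⟨D, hD0, hD⟩ := condB_bounded hwcomp
  have hCc : IsClosed C := condB_closed hwcomp
  obtain ⟨K, hK0, hkey⟩ := condB_key hγ0 hγ1 hμ0 hμ2 hμγ hmaps hB
  -- approximate fixed point sequence
  obtain ⟨x, hxC, hxT⟩ :
      ∃ x : ℕ → X, (∀ n, x n ∈ C) ∧ Tendsto (fun n => ‖x n - T (x n)‖) atTop (𝓝 0) := by
    rcases eq_or_lt_of_le hμ0 with hμz | hμpos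
    · rcases eq_or_lt_of_le hγ0 with hγz | hγpos
      · -- γ = 0, μ = 0 : nonexpansive
        have hne : ∀ x ∈ C, ∀ y ∈ C, ‖T x - T y‖ ≤ ‖x - y‖ := by
          intro x hx y hy
          have := hB x hx y hy (by rw [← hγz, ← hμz]; simp [norm_nonneg])
          rw [← hγz, ← hμz] at this
          simpa using this
        exact condB_afps_nonexp hCc hconv hc₀ hD0 hD hmaps hne
      · -- γ > 0, μ = 0 : geometric Picard
        have hB0 : ∀ x ∈ C, ∀ y ∈ C, γ * ‖x - T x‖ ≤ ‖x - y‖ →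
            ‖T x - T y‖ ≤ (1 - γ) * ‖x - y‖ := by
          intro x hx y hy hp
          have := hB x hx y hy (by rw [← hμz]; simpa using hp)
          rw [← hμz] at this
          simpa using this
        exact condB_afps_geom hc₀ hγpos hγ1 hmaps hB0
    · exact condB_afps_mu_pos hc₀ hD hγ1 hμpos hμ2 hμγ hmaps hB
  -- the asymptotic-radius function
  set Φ : X → ℝ := fun w => limsup (fun n => ‖w - x n‖) atTop with hΦ
  have hbW : ∀ w : X, IsBoundedUnder (· ≤ ·) atTop (fun n => ‖w - x n‖) := by
    intro w
    refine isBoundedUnder_of ⟨‖w - x 0‖ + D, fun n => ?_⟩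
    calc ‖w - x n‖ ≤ ‖w - x 0‖ + ‖x 0 - x n‖ := norm_sub_le_norm_sub_add_norm_sub _ _ _
      _ ≤ ‖w - x 0‖ + D := by linarith [hD (x 0) (hxC 0) (x n) (hxC n)]
  have hcoW : ∀ w : X, IsCoboundedUnder (· ≤ ·) atTop (fun n => ‖w - x n‖) := by
    intro w
    exact (isBoundedUnder_of ⟨0, fun n => norm_nonneg _⟩ :
      IsBoundedUnder (· ≥ ·) atTop (fun n => ‖w - x n‖)).isCoboundedUnder_le
  have hΦub : ∀ (w : X) (b : ℝ), (∀ᶠ n in atTop, ‖w - x n‖ ≤ b) → Φ w ≤ b := by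
    intro w b h
    exact limsup_le_of_le (hcoW w) h
  have hΦev : ∀ (w : X) (ε : ℝ), 0 < ε → ∀ᶠ n in atTop, ‖w - x n‖ < Φ w + ε := by
    intro w ε hε
    exact eventually_lt_of_limsup_lt (by linarith [le_refl (Φ w)]) (hbW w)
  have hΦ0 : ∀ w : X, 0 ≤ Φ w := by
    intro w
    apply le_limsup_of_frequently_le _ (hbW w)
    exact Eventually.frequently (Eventually.of_forall fun n => norm_nonneg _)
  -- Φ is 1-Lipschitz, hence continuous
  have hΦlip : ∀ w w' : X, Φ w ≤ Φ w' + ‖w - w'‖ := by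
    intro w w'
    have : ∀ ε > 0, Φ w ≤ Φ w' + ‖w - w'‖ + ε := by
      intro ε hε
      apply hΦub
      filter_upwards [hΦev w' ε hε] with n hn
      calc ‖w - x n‖ ≤ ‖w - w'‖ + ‖w' - x n‖ := norm_sub_le_norm_sub_add_norm_sub _ _ _
        _ ≤ ‖w - w'‖ + (Φ w' + ε) := by linarith
        _ = Φ w' + ‖w - w'‖ + ε := by ring
    exact le_of_forall_pos_le_add this
  have hΦcont : Continuous Φ := by
    have : LipschitzWith 1 Φ := by
      apply LipschitzWith.of_dist_le_mul
      intro w w'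
      rw [Real.dist_eq, dist_eq_norm, NNReal.coe_one, one_mul, abs_le]
      constructor
      · have := hΦlip w' w
        rw [norm_sub_rev w' w] at this
        linarith
      · have := hΦlip w w'
        linarith
    exact this.continuous
  -- Φ is convex on C
  have hΦconv : ConvexOn ℝ C Φ := by
    refine ⟨hconv, fun w hw w' hw' p q hp hq hpq => ?_⟩
    have : ∀ ε > 0, Φ (p • w + q • w') ≤ p * Φ w + q * Φ w' + ε := by
      intro ε hε
      apply hΦub
      filter_upwards [hΦev w ε hε, hΦev w' ε hε] with n h1 h2
      have hptw : p • w + q • w' - x n = p • (w - x n) + q • (w' - x n) := by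
        have : p • (w - x n) + q • (w' - x n) = p • w + q • w' - (p + q) • x n := by
          module
        rw [this, hpq, one_smul]
      calc ‖p • w + q • w' - x n‖ = ‖p • (w - x n) + q • (w' - x n)‖ := by rw [hptw]
        _ ≤ ‖p • (w - x n)‖ + ‖q • (w' - x n)‖ := norm_add_le _ _
        _ = p * ‖w - x n‖ + q * ‖w' - x n‖ := by
            rw [norm_smul, norm_smul, Real.norm_eq_abs, Real.norm_eq_abs,
              abs_of_nonneg hp, abs_of_nonneg hq]
        _ ≤ p * (Φ w + ε) + q * (Φ w' + ε) := by
            have := le_of_lt h1; have := le_of_lt h2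
            apply add_le_add <;> nlinarith
        _ = p * Φ w + q * Φ w' + ε := by linear_combination ε * hpq
    exact le_of_forall_pos_le_add this
  -- minimize Φ over C
  obtain ⟨z, hzC, hzmin⟩ :=
    condB_exists_min ⟨c₀, hc₀⟩ hCc hwcomp Φ hΦcont hΦconv (fun w _ => hΦ0 w)
  refine ⟨z, hzC, ?_⟩
  by_contra hne
  have he : 0 < ‖z - T z‖ := by
    rw [norm_pos_iff, sub_ne_zero]
    exact fun h => hne h.symm
  have hTzC : T z ∈ C := hmaps hzC
  -- Φ (T z) ≤ Φ z
  have hΦTz : Φ (T z) ≤ Φ z := by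
    apply le_of_forall_pos_le_add
    intro ε hε
    apply hΦub
    have hε2 : 0 < ε / (2 * (K + 1)) := by positivity
    filter_upwards [hxT.eventually (gt_mem_nhds hε2), hΦev z (ε / 2) (by positivity)]
      with n h1 h2
    have hk := hkey (x n) (hxC n) z hzC
    have hK1 : K * ‖x n - T (x n)‖ ≤ ε / 2 := by
      have h1' : ‖x n - T (x n)‖ ≤ ε / (2 * (K + 1)) := le_of_lt h1
      calc K * ‖x n - T (x n)‖ ≤ K * (ε / (2 * (K + 1))) := by
            nlinarith [norm_nonneg (x n - T (x n))]
        _ = K * ε / (2 * (K + 1)) := by ring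
        _ ≤ ε / 2 := by
            rw [div_le_div_iff₀ (by positivity) (by norm_num)]
            nlinarith
    calc ‖T z - x n‖ = ‖x n - T z‖ := norm_sub_rev _ _
      _ ≤ K * ‖x n - T (x n)‖ + ‖x n - z‖ := hk
      _ ≤ ε / 2 + ‖z - x n‖ := by rw [norm_sub_rev (x n) z]; linarith
      _ ≤ ε / 2 + (Φ z + ε / 2) := by linarith
      _ = Φ z + ε := by ring
  rcases eq_or_lt_of_le (hΦ0 z) with hrz | hrpos
  · -- Φ z = 0 : x n → z and x n → T z, contradiction with z ≠ T z
    have : ∀ ε > 0, ‖z - T z‖ < ε := by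
      intro ε hε
      have h1 := hΦev z (ε / 2) (by positivity)
      have h2 : ∀ᶠ n in atTop, ‖T z - x n‖ < ε / 2 := by
        apply (eventually_lt_of_limsup_lt ?_ (hbW (T z)))
        calc limsup (fun n => ‖T z - x n‖) atTop = Φ (T z) := rfl
          _ ≤ Φ z := hΦTz
          _ < ε / 2 := by rw [← hrz]; positivity
      obtain ⟨n, hn1, hn2⟩ := (h1.and h2).exists
      calc ‖z - T z‖ ≤ ‖z - x n‖ + ‖x n - T z‖ := norm_sub_le_norm_sub_add_norm_sub _ _ _
        _ = ‖z - x n‖ + ‖T z - x n‖ := by rw [norm_sub_rev (x n) (T z)]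
        _ < ε / 2 - Φ z + ε / 2 := by rw [← hrz] at hn1 ⊢; linarith
        _ ≤ ε := by rw [← hrz]; linarith
    linarith [this ‖z - T z‖ he]
  · -- Φ z > 0 : uniform convexity at the midpoint
    set e := ‖z - T z‖ with hedef
    set ε : ℝ := e / (Φ z + 1) with hεdef
    have hεpos : 0 < ε := by positivity
    obtain ⟨δ, hδ, H⟩ := condB_ucs (X := X) hεpos
    set η : ℝ := min 1 (δ * Φ z / 4) with hηdef
    have hηpos : 0 < η := lt_min one_pos (by positivity)
    have hη1 : η ≤ 1 := min_le_left _ _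
    have hη4 : η ≤ δ * Φ z / 4 := min_le_right _ _
    set m : X := (1 / 2 : ℝ) • z + (1 / 2 : ℝ) • T z with hmdef
    have hmC : m ∈ C := hconv hzC hTzC (by norm_num) (by norm_num) (by norm_num)
    have hΦm : Φ m ≤ (1 - δ / 2) * (Φ z + η) := by
      apply hΦub
      filter_upwards [hΦev z η hηpos, hΦev (T z) η hηpos] with n h1 h2
      have hu : ‖z - x n‖ ≤ Φ z + η := le_of_lt h1
      have hv : ‖T z - x n‖ ≤ Φ z + η := by
        have : Φ (T z) + η ≤ Φ z + η := by linarith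
        linarith
      have huv : ε * (Φ z + η) ≤ ‖(z - x n) - (T z - x n)‖ := by
        have : (z - x n) - (T z - x n) = z - T z := by abel
        rw [this, ← hedef]
        calc ε * (Φ z + η) ≤ ε * (Φ z + 1) := by nlinarith
          _ = e := by rw [hεdef]; field_simp
      have hH := H (Φ z + η) (by linarith) (z - x n) (T z - x n) hu hv huv
      have hmx : m - x n = (1 / 2 : ℝ) • ((z - x n) + (T z - x n)) := by
        rw [hmdef]; module
      calc ‖m - x n‖ = (1 / 2 : ℝ) * ‖(z - x n) + (T z - x n)‖ := by
            rw [hmx, norm_smul, Real.norm_eq_abs]; norm_num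
        _ ≤ (1 / 2 : ℝ) * ((2 - δ) * (Φ z + η)) := by linarith
        _ = (1 - δ / 2) * (Φ z + η) := by ring
    have hmin := hzmin m hmC
    nlinarith [mul_pos hδ hrpos, mul_nonneg hδ.le hηpos.le]
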